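/- (Path reversal symmetry) For all integers l ≤ n, k ≤ m and nonzero complex a, b, q, complex p with |p| < 1, assuming all theta denominators nonzero, the elliptic binomial coefficient satisfies W(l,k;n,m; a,b) = W(-1-n,-m;-1-l,-k; a^{-1}, q b^{-1}). -/

import Mathlib

open Finset

noncomputable def pochInf (x p : ℂ) : ℂ := ∏' k : ℕ, (1 - x * p ^ k)

noncomputable def theta (x p : ℂ) : ℂ := pochInf x p * pochInf (p / x) p

noncomputable def qps (a q p : ℂ) (n : ℤ) : ℂ :=
  if 0 ≤ n then ∏ k ∈ Finset.range n.toNat, theta (a * q ^ (k : ℤ)) p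
  else (∏ k ∈ Finset.range (-n).toNat, theta (a * q ^ (n + k)) p)⁻¹
noncomputable def w (a b q p : ℂ) (n m : ℤ) : ℂ :=
  theta (a * q ^ (n + 2*m)) p * theta (b * q ^ (2*n)) p * theta (b * q ^ (2*n - 1)) p
    * theta (a * q ^ (1 - n) / b) p * theta (a * q ^ (-n) / b) p
  / (theta (a * q ^ n) p * theta (b * q ^ (2*n + m)) p * theta (b * q ^ (2*n + m - 1)) p
    * theta (a * q ^ (1 + m - n) / b) p * theta (a * q ^ (m - n) / b) p)
  * q ^ m

noncomputable def W (a b q p : ℂ) (l k n m : ℤ) : ℂ :=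
  (qps (q ^ (1 + n - l)) q p (m - k) * qps (a * q ^ (1 + n + 2*k)) q p (m - k)
    * qps (b * q ^ (1 + n + k + l)) q p (m - k) * qps (a * q ^ (1 + k - n) / b) q p (m - k))
  / (qps q q p (m - k) * qps (a * q ^ (1 + l + 2*k)) q p (m - k)
    * qps (b * q ^ (1 + 2*n + k)) q p (m - k) * qps (a * q ^ (1 + k - l) / b) q p (m - k))
  * ((qps (a * q ^ (1 + l + 2*k)) q p (n - l) * qps (a * q ^ (1 - n) / b) q p (n - l)
    * qps (a * q ^ (-n) / b) q p (n - l))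
  / (qps (a * q ^ (1 + l)) q p (n - l) * qps (a * q ^ (1 + k - n) / b) q p (n - l)
    * qps (a * q ^ (k - n) / b) q p (n - l)))
  * (qps (b * q ^ (1 + 2*l)) q p (2*n - 2*l) / qps (b * q ^ (1 + k + 2*l)) q p (2*n - 2*l))
  * q ^ ((n - l) * k)

noncomputable def GF (wt : ℤ → ℤ → ℂ) (l k : ℤ) : ℕ → ℕ → ℂ
  | 0, 0 => 1
  | 0, _ + 1 => 1
  | i + 1, 0 => GF wt l k i 0 * wt (l + i + 1) k
  | i + 1, j + 1 => GF wt l k (i + 1) j + GF wt l k i (j + 1) * wt (l + i + 1) (k + j + 1)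
termination_by i j => (i, j)

lemma multipliable_aux (x p : ℂ) (hp : ‖p‖ < 1) :
    Multipliable (fun k : ℕ => 1 - x * p ^ k) := by
  by_cases hz : ∃ k, 1 - x * p ^ k = 0
  · obtain ⟨k0, hk0⟩ := hz
    refine ⟨0, ?_⟩
    refine Filter.Tendsto.congr' ?_ tendsto_const_nhds
    filter_upwards [Filter.eventually_ge_atTop ({k0} : Finset ℕ)] with s hs
    exact (Finset.prod_eq_zero (hs (Finset.mem_singleton_self k0)) hk0).symm
  · push_neg at hz
    have hsum : Summable (fun n : ℕ => Complex.log (1 - x * p ^ n)) := by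
      have hg : Summable (fun n : ℕ => (3/2 : ℝ) * (‖x‖ * ‖p‖ ^ n)) :=
        ((summable_geometric_of_lt_one (norm_nonneg p) hp).mul_left _).mul_left _
      apply Summable.of_norm_bounded_eventually_nat hg
      have ht : Filter.Tendsto (fun n : ℕ => ‖x‖ * ‖p‖ ^ n)
          Filter.atTop (nhds 0) := by
        simpa using (tendsto_pow_atTop_nhds_zero_of_lt_one (norm_nonneg p) hp).const_mul
          (‖x‖)
      filter_upwards [ht.eventually_le_const (by norm_num : (0:ℝ) < 1/2)] with n hn
      have h1 : ‖-(x * p ^ n)‖ ≤ 1/2 := by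
        simpa [map_mul, map_pow] using hn
      have := Complex.norm_log_one_add_half_le_self h1
      rw [show (1 : ℂ) + -(x * p ^ n) = 1 - x * p ^ n by ring] at this
      simpa [map_mul, map_pow] using this
    exact Complex.multipliable_of_summable_log hsum

set_option maxHeartbeats 1000000 in
lemma pochInf_succ (x p : ℂ) (hp : ‖p‖ < 1) :
    pochInf x p = (1 - x) * pochInf (x * p) p := by
  have he : (fun n : ℕ => 1 - x * p ^ (n + 1)) = fun n => 1 - (x * p) * p ^ n := by
    funext n; ring
  have hm : Multipliable (fun n : ℕ => 1 - x * p ^ (n + 1)) := by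
    rw [he]; exact multipliable_aux _ _ hp
  unfold pochInf
  rw [tprod_eq_zero_mul' hm, he]
  simp only [pow_zero, mul_one]

lemma theta_inv (x p : ℂ) (hx : x ≠ 0) (hp : ‖p‖ < 1) :
    theta x⁻¹ p = -x⁻¹ * theta x p := by
  unfold theta
  have h1 : p / x⁻¹ = x * p := by field_simp
  have h2 : x⁻¹ * p = p / x := by field_simp
  rw [h1, pochInf_succ x p hp, pochInf_succ x⁻¹ p hp, h2]
  have h3 : (1 - x⁻¹) = -x⁻¹ * (1 - x) := by field_simp; ring
  rw [h3]; ring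

noncomputable def PP (q p c : ℂ) (s : ℤ) (N : ℕ) : ℂ :=
  ∏ j ∈ Finset.range N, theta (c * q ^ (s + (j : ℤ))) p

noncomputable def TQ (q : ℂ) (N : ℕ) : ℂ := ∏ j ∈ Finset.range N, q ^ j

lemma TQ_ne_zero (q : ℂ) (N : ℕ) (hq : q ≠ 0) : TQ q N ≠ 0 :=
  Finset.prod_ne_zero_iff.2 fun _ _ => pow_ne_zero _ hq

lemma qps_eq_PP {c q : ℂ} (p : ℂ) (hq : q ≠ 0) (s : ℤ) {N : ℤ} {NN : ℕ} (hN : (NN : ℤ) = N) :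
    qps (c * q ^ s) q p N = PP q p c s NN := by
  unfold qps PP
  rw [if_pos (by omega), show N.toNat = NN by omega]
  refine Finset.prod_congr rfl fun j _ => ?_
  rw [mul_assoc, ← zpow_add₀ hq]

lemma qps_pow_eq_PP {q : ℂ} (p : ℂ) (hq : q ≠ 0) (s : ℤ) {N : ℤ} {NN : ℕ} (hN : (NN : ℤ) = N) :
    qps (q ^ s) q p N = PP q p 1 s NN := by
  rw [← one_mul (q ^ s), qps_eq_PP p hq s hN]

lemma qps_q_eq_PP {q : ℂ} (p : ℂ) (hq : q ≠ 0) {N : ℤ} {NN : ℕ} (hN : (NN : ℤ) = N) :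
    qps q q p N = PP q p 1 1 NN := by
  have := qps_pow_eq_PP (q := q) p hq 1 hN
  rwa [zpow_one] at this

lemma PP_congr (q p c : ℂ) {s t : ℤ} (N : ℕ) (h : s = t) : PP q p c s N = PP q p c t N := by
  rw [h]

lemma PP_concat (q p c : ℂ) (s : ℤ) (M N : ℕ) :
    PP q p c s (M + N) = PP q p c s M * PP q p c (s + M) N := by
  unfold PP
  rw [Finset.prod_range_add]
  congr 1
  refine Finset.prod_congr rfl fun j _ => ?_
  congr 2
  push_cast; ring

lemma PP_concat2 (q p c : ℂ) {s t : ℤ} (M N : ℕ) (h : t = s + M) :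
    PP q p c s M * PP q p c t N = PP q p c s (M + N) := by
  rw [h, ← PP_concat]

lemma PP_concat3 (q p c : ℂ) {s t u : ℤ} (M N K : ℕ) (h1 : t = s + M) (h2 : u = t + N) :
    PP q p c s M * PP q p c t N * PP q p c u K = PP q p c s (M + N + K) := by
  subst h2; subst h1
  rw [PP_concat q p c s (M + N) K, PP_concat q p c s M N,
    PP_congr q p c (N := K) (show s + ((M : ℕ) + N : ℕ) = s + (M : ℕ) + (N : ℕ) by push_cast; ring)]

lemma PP_ne_zero (q p c : ℂ) (s : ℤ) (N : ℕ) (h : ∀ i : ℤ, theta (c * q ^ i) p ≠ 0) :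
    PP q p c s N ≠ 0 :=
  Finset.prod_ne_zero_iff.2 fun _ _ => h _

lemma PP_inv (q p c : ℂ) (hq : q ≠ 0) (hc : c ≠ 0) (hp : ‖p‖ < 1) (s : ℤ) (N : ℕ) :
    PP q p c⁻¹ s N = (-c⁻¹) ^ N * q ^ (s * N) * TQ q N * PP q p c (1 - s - N) N := by
  unfold PP
  have step1 : ∀ j ∈ Finset.range N, theta (c⁻¹ * q ^ (s + (j : ℤ))) p
      = ((-c⁻¹ * q ^ s) * q ^ j) * theta (c * q ^ (-(s + (j : ℤ)))) p := by
    intro j _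
    have hx : c * q ^ (-(s + (j : ℤ))) ≠ 0 := mul_ne_zero hc (zpow_ne_zero _ hq)
    have := theta_inv (c * q ^ (-(s + (j : ℤ)))) p hx hp
    rw [mul_inv, ← zpow_neg, neg_neg] at this
    rw [this, zpow_add₀ hq, zpow_natCast]
    ring
  rw [Finset.prod_congr rfl step1, Finset.prod_mul_distrib, Finset.prod_mul_distrib,
    Finset.prod_const, Finset.card_range]
  have hrefl : ∏ j ∈ Finset.range N, theta (c * q ^ (-(s + (j : ℤ)))) p
      = ∏ j ∈ Finset.range N, theta (c * q ^ ((1 - s - N) + (j : ℤ))) p := by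
    rw [← Finset.prod_range_reflect (fun j => theta (c * q ^ ((1 - s - (N:ℤ)) + (j : ℤ))) p) N]
    refine Finset.prod_congr rfl fun j hj => ?_
    have hjN : j < N := Finset.mem_range.1 hj
    congr 2
    have : ((N - 1 - j : ℕ) : ℤ) = (N : ℤ) - 1 - j := by omega
    rw [this]; ring
  rw [hrefl, mul_pow]
  have : ((q ^ s) ^ N : ℂ) = q ^ (s * N) := by
    rw [← zpow_natCast (q ^ s) N, ← zpow_mul]
  rw [this]
  unfold TQ
  ring

set_option maxHeartbeats 3000000 in
theorem elliptic_binomial_path_reversal (a b q p : ℂ) (ha : a ≠ 0) (hb : b ≠ 0) (hq : q ≠ 0)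
    (hp : ‖p‖ < 1)
    (h : ∀ i : ℤ, theta (a * q ^ i) p ≠ 0 ∧ theta (b * q ^ i) p ≠ 0
      ∧ theta (a * q ^ i / b) p ≠ 0 ∧ theta (a⁻¹ * q ^ i) p ≠ 0
      ∧ theta (b⁻¹ * q ^ i) p ≠ 0 ∧ theta (a⁻¹ * b * q ^ i) p ≠ 0
      ∧ (1 ≤ i → theta (q ^ i) p ≠ 0))
    (l k n m : ℤ) (hln : l ≤ n) (hkm : k ≤ m) :
    W a b q p l k n m = W a⁻¹ (q * b⁻¹) q p (-1 - n) (-m) (-1 - l) (-k) := by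
  have hab : a / b ≠ 0 := div_ne_zero ha hb
  set N1 : ℕ := (m - k).toNat with hN1def
  set N2 : ℕ := (n - l).toNat with hN2def
  have hN1 : (N1 : ℤ) = m - k := Int.toNat_of_nonneg (by omega)
  have hN2 : (N2 : ℤ) = n - l := Int.toNat_of_nonneg (by omega)
  have hN3 : ((2 * N2 : ℕ) : ℤ) = 2 * n - 2 * l := by push_cast; omega
  have hb' : ∀ E : ℤ, q * b⁻¹ * q ^ E = b⁻¹ * q ^ (E + 1) := fun E => by
    rw [zpow_add₀ hq, zpow_one]; ring
  have hab' : ∀ E : ℤ, a⁻¹ * q ^ E / (q * b⁻¹) = (a / b)⁻¹ * q ^ (E - 1) := fun E => by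
    have h1 : (q : ℂ) ^ (E - 1) = q ^ E / q := by rw [zpow_sub₀ hq, zpow_one]
    rw [h1]
    field_simp
  have habq : ∀ E : ℤ, a * q ^ E / b = a / b * q ^ E := fun E => by ring
  unfold W
  rw [show (1 + (-1 - l) - (-1 - n) : ℤ) = 1 + n - l by ring,
      show (-k - -m : ℤ) = m - k by ring,
      show (1 + (-1 - l) + 2 * -m : ℤ) = -l - 2*m by ring,
      show (1 + (-1 - l) + -m + (-1 - n) : ℤ) = -1 - l - m - n by ring,
      show (1 + -m - (-1 - l) : ℤ) = 2 + l - m by ring,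
      show (1 + (-1 - n) + 2 * -m : ℤ) = -n - 2*m by ring,
      show (1 + 2 * (-1 - l) + -m : ℤ) = -1 - 2*l - m by ring,
      show (1 + -m - (-1 - n) : ℤ) = 2 + n - m by ring,
      show (1 + -m + 2 * (-1 - n) : ℤ) = -1 - m - 2*n by ring,
      show (1 + 2 * (-1 - n) : ℤ) = -1 - 2*n by ring,
      show (2 * (-1 - l) - 2 * (-1 - n) : ℤ) = 2 * n - 2 * l by ring,
      show (-1 - l - (-1 - n) : ℤ) = n - l by ring,
      show (1 - (-1 - l) : ℤ) = 2 + l by ring,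
      show (-(-1 - l) : ℤ) = 1 + l by ring,
      show (1 + (-1 - n) : ℤ) = -n by ring,
      show (-m - (-1 - l) : ℤ) = 1 + l - m by ring]
  simp only [hb', hab', habq]
  rw [show (-1 - l - m - n + 1 : ℤ) = -l - m - n by ring,
      show (-1 - 2*l - m + 1 : ℤ) = -2*l - m by ring,
      show (-1 - 2*n + 1 : ℤ) = -2*n by ring,
      show (-1 - m - 2*n + 1 : ℤ) = -m - 2*n by ring,
      show (2 + l - m - 1 : ℤ) = 1 + l - m by ring,
      show (2 + n - m - 1 : ℤ) = 1 + n - m by ring,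
      show (2 + l - 1 : ℤ) = 1 + l by ring,
      show (1 + l - 1 : ℤ) = l by ring,
      show (1 + l - m - 1 : ℤ) = l - m by ring]
  -- convert all qps to PP
  rw [qps_pow_eq_PP p hq (1 + n - l) hN1, qps_q_eq_PP p hq hN1,
      -- LHS bracket 1
      qps_eq_PP p hq (1 + n + 2 * k) hN1, qps_eq_PP p hq (1 + n + k + l) hN1,
      qps_eq_PP p hq (1 + k - n) hN1, qps_eq_PP p hq (1 + l + 2 * k) hN1,
      qps_eq_PP p hq (1 + 2 * n + k) hN1, qps_eq_PP p hq (1 + k - l) hN1,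
      -- LHS bracket 2
      qps_eq_PP p hq (1 + l + 2 * k) hN2, qps_eq_PP p hq (1 - n) hN2,
      qps_eq_PP p hq (-n) hN2, qps_eq_PP p hq (1 + l) hN2,
      qps_eq_PP p hq (1 + k - n) hN2, qps_eq_PP p hq (k - n) hN2,
      -- LHS bracket 3
      qps_eq_PP p hq (1 + 2 * l) hN3, qps_eq_PP p hq (1 + k + 2 * l) hN3,
      -- RHS bracket 1
      qps_eq_PP p hq (-l - 2 * m) hN1, qps_eq_PP p hq (-l - m - n) hN1,
      qps_eq_PP p hq (1 + l - m) hN1, qps_eq_PP p hq (-n - 2 * m) hN1,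
      qps_eq_PP p hq (-2 * l - m) hN1, qps_eq_PP p hq (1 + n - m) hN1,
      -- RHS bracket 2
      qps_eq_PP p hq (-n - 2 * m) hN2, qps_eq_PP p hq (1 + l) hN2,
      qps_eq_PP p hq l hN2, qps_eq_PP p hq (-n) hN2,
      qps_eq_PP p hq (1 + l - m) hN2, qps_eq_PP p hq (l - m) hN2,
      -- RHS bracket 3
      qps_eq_PP p hq (-2 * n) hN3, qps_eq_PP p hq (-m - 2 * n) hN3]
  -- apply inversion on the RHS PP terms
  rw [PP_inv q p a hq ha hp (-l - 2 * m) N1, PP_inv q p b hq hb hp (-l - m - n) N1,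
      PP_inv q p (a / b) hq hab hp (1 + l - m) N1, PP_inv q p a hq ha hp (-n - 2 * m) N1,
      PP_inv q p b hq hb hp (-2 * l - m) N1, PP_inv q p (a / b) hq hab hp (1 + n - m) N1,
      PP_inv q p a hq ha hp (-n - 2 * m) N2, PP_inv q p (a / b) hq hab hp (1 + l) N2,
      PP_inv q p (a / b) hq hab hp l N2, PP_inv q p a hq ha hp (-n) N2,
      PP_inv q p (a / b) hq hab hp (1 + l - m) N2, PP_inv q p (a / b) hq hab hp (l - m) N2,
      PP_inv q p b hq hb hp (-2 * n) (2 * N2), PP_inv q p b hq hb hp (-m - 2 * n) (2 * N2)]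
  -- canonicalize the exponents of the reflected PP terms
  rw [PP_congr q p a (N := N1) (show (1 - (-l - 2 * m) - (N1:ℤ)) = 1 + l + k + m by omega),
      PP_congr q p b (N := N1) (show (1 - (-l - m - n) - (N1:ℤ)) = 1 + n + k + l by omega),
      PP_congr q p (a / b) (N := N1) (show (1 - (1 + l - m) - (N1:ℤ)) = k - l by omega),
      PP_congr q p a (N := N1) (show (1 - (-n - 2 * m) - (N1:ℤ)) = 1 + n + k + m by omega),
      PP_congr q p b (N := N1) (show (1 - (-2 * l - m) - (N1:ℤ)) = 1 + k + 2 * l by omega),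
      PP_congr q p (a / b) (N := N1) (show (1 - (1 + n - m) - (N1:ℤ)) = k - n by omega),
      PP_congr q p a (N := N2) (show (1 - (-n - 2 * m) - (N2:ℤ)) = 1 + l + 2 * m by omega),
      PP_congr q p (a / b) (N := N2) (show (1 - (1 + l) - (N2:ℤ)) = -n by omega),
      PP_congr q p (a / b) (N := N2) (show (1 - l - (N2:ℤ)) = 1 - n by omega),
      PP_congr q p a (N := N2) (show (1 - (-n) - (N2:ℤ)) = 1 + l by omega),
      PP_congr q p (a / b) (N := N2) (show (1 - (1 + l - m) - (N2:ℤ)) = m - n by omega),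
      PP_congr q p (a / b) (N := N2) (show (1 - (l - m) - (N2:ℤ)) = 1 + m - n by omega),
      PP_congr q p b (N := 2 * N2) (show (1 - (-2 * n) - ((2 * N2 : ℕ):ℤ)) = 1 + 2 * l by omega),
      PP_congr q p b (N := 2 * N2) (show (1 - (-m - 2 * n) - ((2 * N2 : ℕ):ℤ)) = 1 + m + 2 * l by omega)]

  -- nonzeroness facts
  have hna : (-a⁻¹ : ℂ) ≠ 0 := neg_ne_zero.2 (inv_ne_zero ha)
  have hnb : (-b⁻¹ : ℂ) ≠ 0 := neg_ne_zero.2 (inv_ne_zero hb)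
  have hnab : (-(a / b)⁻¹ : ℂ) ≠ 0 := neg_ne_zero.2 (inv_ne_zero hab)
  have hPa : ∀ (s : ℤ) (N : ℕ), PP q p a s N ≠ 0 := fun s N =>
    PP_ne_zero q p a s N fun i => (h i).1
  have hPb : ∀ (s : ℤ) (N : ℕ), PP q p b s N ≠ 0 := fun s N =>
    PP_ne_zero q p b s N fun i => (h i).2.1
  have hPab : ∀ (s : ℤ) (N : ℕ), PP q p (a / b) s N ≠ 0 := fun s N =>
    PP_ne_zero q p (a / b) s N fun i => by
      rw [div_mul_eq_mul_div]; exact (h i).2.2.1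
  have hP1 : ∀ N : ℕ, PP q p 1 1 N ≠ 0 := fun N =>
    Finset.prod_ne_zero_iff.2 fun j _ => by
      rw [one_mul]; exact (h (1 + (j : ℤ))).2.2.2.2.2.2 (by omega)
  -- family identities
  have famA : PP q p a (1 + l + 2 * k) N2 * PP q p a (1 + n + 2 * k) N1 *
        PP q p a (1 + n + k + m) N1
      = PP q p a (1 + l + 2 * k) N1 * PP q p a (1 + l + k + m) N1 *
        PP q p a (1 + l + 2 * m) N2 := by
    rw [PP_concat3 q p a N2 N1 N1 (show (1 + n + 2 * k : ℤ) = 1 + l + 2 * k + (N2:ℤ) by omega)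
          (show (1 + n + k + m : ℤ) = 1 + n + 2 * k + (N1:ℤ) by omega),
        PP_concat3 q p a N1 N1 N2 (show (1 + l + k + m : ℤ) = 1 + l + 2 * k + (N1:ℤ) by omega)
          (show (1 + l + 2 * m : ℤ) = 1 + l + k + m + (N1:ℤ) by omega)]
    congr 1
    omega
  have famB : PP q p b (1 + k + 2 * l) N1 * PP q p b (1 + m + 2 * l) (2 * N2)
      = PP q p b (1 + k + 2 * l) (2 * N2) * PP q p b (1 + 2 * n + k) N1 := by
    rw [PP_concat2 q p b N1 (2 * N2) (show (1 + m + 2 * l : ℤ) = 1 + k + 2 * l + (N1:ℤ) by omega),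
        PP_concat2 q p b (2 * N2) N1
          (show (1 + 2 * n + k : ℤ) = 1 + k + 2 * l + ((2 * N2 : ℕ):ℤ) by omega)]
    congr 1
    omega
  have famC : PP q p (a / b) (k - n) N1 * PP q p (a / b) (m - n) N2 *
        (PP q p (a / b) (1 + k - n) N1 * PP q p (a / b) (1 + m - n) N2)
      = PP q p (a / b) (k - n) N2 * PP q p (a / b) (k - l) N1 *
        (PP q p (a / b) (1 + k - n) N2 * PP q p (a / b) (1 + k - l) N1) := by
    rw [PP_concat2 q p (a / b) N1 N2 (show (m - n : ℤ) = k - n + (N1:ℤ) by omega),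
        PP_concat2 q p (a / b) N1 N2 (show (1 + m - n : ℤ) = 1 + k - n + (N1:ℤ) by omega),
        PP_concat2 q p (a / b) N2 N1 (show (k - l : ℤ) = k - n + (N2:ℤ) by omega),
        PP_concat2 q p (a / b) N2 N1 (show (1 + k - l : ℤ) = 1 + k - n + (N2:ℤ) by omega),
        Nat.add_comm N1 N2]
  have hsum : ((n - l) * k + (-n - 2 * m) * (N1:ℤ) + (-2 * l - m) * (N1:ℤ)
        + (1 + n - m) * (N1:ℤ) + (-n) * (N2:ℤ) + (1 + l - m) * (N2:ℤ) + (l - m) * (N2:ℤ)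
        + (-m - 2 * n) * ((2 * N2 : ℕ):ℤ))
      = ((n - l) * -m + (-l - 2 * m) * (N1:ℤ) + (-l - m - n) * (N1:ℤ)
        + (1 + l - m) * (N1:ℤ) + (-n - 2 * m) * (N2:ℤ) + (1 + l) * (N2:ℤ) + l * (N2:ℤ)
        + (-2 * n) * ((2 * N2 : ℕ):ℤ)) := by
    push_cast
    rw [hN1, hN2]
    ring
  have famS : q ^ ((n - l) * k)
        * ((-a⁻¹) ^ N1 * q ^ ((-n - 2 * m) * (N1:ℤ)) * TQ q N1)
        * ((-b⁻¹) ^ N1 * q ^ ((-2 * l - m) * (N1:ℤ)) * TQ q N1)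
        * ((-(a / b)⁻¹) ^ N1 * q ^ ((1 + n - m) * (N1:ℤ)) * TQ q N1)
        * ((-a⁻¹) ^ N2 * q ^ ((-n) * (N2:ℤ)) * TQ q N2)
        * ((-(a / b)⁻¹) ^ N2 * q ^ ((1 + l - m) * (N2:ℤ)) * TQ q N2)
        * ((-(a / b)⁻¹) ^ N2 * q ^ ((l - m) * (N2:ℤ)) * TQ q N2)
        * ((-b⁻¹) ^ (2 * N2) * q ^ ((-m - 2 * n) * ((2 * N2 : ℕ):ℤ)) * TQ q (2 * N2))
      = q ^ ((n - l) * -m)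
        * ((-a⁻¹) ^ N1 * q ^ ((-l - 2 * m) * (N1:ℤ)) * TQ q N1)
        * ((-b⁻¹) ^ N1 * q ^ ((-l - m - n) * (N1:ℤ)) * TQ q N1)
        * ((-(a / b)⁻¹) ^ N1 * q ^ ((1 + l - m) * (N1:ℤ)) * TQ q N1)
        * ((-a⁻¹) ^ N2 * q ^ ((-n - 2 * m) * (N2:ℤ)) * TQ q N2)
        * ((-(a / b)⁻¹) ^ N2 * q ^ ((1 + l) * (N2:ℤ)) * TQ q N2)
        * ((-(a / b)⁻¹) ^ N2 * q ^ (l * (N2:ℤ)) * TQ q N2)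
        * ((-b⁻¹) ^ (2 * N2) * q ^ ((-2 * n) * ((2 * N2 : ℕ):ℤ)) * TQ q (2 * N2)) := by
    calc q ^ ((n - l) * k)
        * ((-a⁻¹) ^ N1 * q ^ ((-n - 2 * m) * (N1:ℤ)) * TQ q N1)
        * ((-b⁻¹) ^ N1 * q ^ ((-2 * l - m) * (N1:ℤ)) * TQ q N1)
        * ((-(a / b)⁻¹) ^ N1 * q ^ ((1 + n - m) * (N1:ℤ)) * TQ q N1)
        * ((-a⁻¹) ^ N2 * q ^ ((-n) * (N2:ℤ)) * TQ q N2)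
        * ((-(a / b)⁻¹) ^ N2 * q ^ ((1 + l - m) * (N2:ℤ)) * TQ q N2)
        * ((-(a / b)⁻¹) ^ N2 * q ^ ((l - m) * (N2:ℤ)) * TQ q N2)
        * ((-b⁻¹) ^ (2 * N2) * q ^ ((-m - 2 * n) * ((2 * N2 : ℕ):ℤ)) * TQ q (2 * N2))
        = ((-a⁻¹) ^ N1 * (-b⁻¹) ^ N1 * (-(a / b)⁻¹) ^ N1 * (-a⁻¹) ^ N2 * (-(a / b)⁻¹) ^ N2
            * (-(a / b)⁻¹) ^ N2 * (-b⁻¹) ^ (2 * N2) * TQ q N1 * TQ q N1 * TQ q N1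
            * TQ q N2 * TQ q N2 * TQ q N2 * TQ q (2 * N2))
          * (q ^ ((n - l) * k) * q ^ ((-n - 2 * m) * (N1:ℤ)) * q ^ ((-2 * l - m) * (N1:ℤ))
            * q ^ ((1 + n - m) * (N1:ℤ)) * q ^ ((-n) * (N2:ℤ)) * q ^ ((1 + l - m) * (N2:ℤ))
            * q ^ ((l - m) * (N2:ℤ)) * q ^ ((-m - 2 * n) * ((2 * N2 : ℕ):ℤ))) := by ring
      _ = ((-a⁻¹) ^ N1 * (-b⁻¹) ^ N1 * (-(a / b)⁻¹) ^ N1 * (-a⁻¹) ^ N2 * (-(a / b)⁻¹) ^ N2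
            * (-(a / b)⁻¹) ^ N2 * (-b⁻¹) ^ (2 * N2) * TQ q N1 * TQ q N1 * TQ q N1
            * TQ q N2 * TQ q N2 * TQ q N2 * TQ q (2 * N2))
          * q ^ ((n - l) * k + (-n - 2 * m) * (N1:ℤ) + (-2 * l - m) * (N1:ℤ)
            + (1 + n - m) * (N1:ℤ) + (-n) * (N2:ℤ) + (1 + l - m) * (N2:ℤ) + (l - m) * (N2:ℤ)
            + (-m - 2 * n) * ((2 * N2 : ℕ):ℤ)) := by simp only [← zpow_add₀ hq]
      _ = ((-a⁻¹) ^ N1 * (-b⁻¹) ^ N1 * (-(a / b)⁻¹) ^ N1 * (-a⁻¹) ^ N2 * (-(a / b)⁻¹) ^ N2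
            * (-(a / b)⁻¹) ^ N2 * (-b⁻¹) ^ (2 * N2) * TQ q N1 * TQ q N1 * TQ q N1
            * TQ q N2 * TQ q N2 * TQ q N2 * TQ q (2 * N2))
          * q ^ ((n - l) * -m + (-l - 2 * m) * (N1:ℤ) + (-l - m - n) * (N1:ℤ)
            + (1 + l - m) * (N1:ℤ) + (-n - 2 * m) * (N2:ℤ) + (1 + l) * (N2:ℤ) + l * (N2:ℤ)
            + (-2 * n) * ((2 * N2 : ℕ):ℤ)) := by rw [hsum]
      _ = ((-a⁻¹) ^ N1 * (-b⁻¹) ^ N1 * (-(a / b)⁻¹) ^ N1 * (-a⁻¹) ^ N2 * (-(a / b)⁻¹) ^ N2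
            * (-(a / b)⁻¹) ^ N2 * (-b⁻¹) ^ (2 * N2) * TQ q N1 * TQ q N1 * TQ q N1
            * TQ q N2 * TQ q N2 * TQ q N2 * TQ q (2 * N2))
          * (q ^ ((n - l) * -m) * q ^ ((-l - 2 * m) * (N1:ℤ)) * q ^ ((-l - m - n) * (N1:ℤ))
            * q ^ ((1 + l - m) * (N1:ℤ)) * q ^ ((-n - 2 * m) * (N2:ℤ)) * q ^ ((1 + l) * (N2:ℤ))
            * q ^ (l * (N2:ℤ)) * q ^ ((-2 * n) * ((2 * N2 : ℕ):ℤ))) := by simp only [← zpow_add₀ hq]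
      _ = _ := by ring
  -- the cross-multiplied key identity
  have key : (PP q p 1 (1 + n - l) N1 * PP q p a (1 + n + 2 * k) N1 * PP q p b (1 + n + k + l) N1
        * PP q p (a / b) (1 + k - n) N1
        * (PP q p a (1 + l + 2 * k) N2 * PP q p (a / b) (1 - n) N2 * PP q p (a / b) (-n) N2)
        * PP q p b (1 + 2 * l) (2 * N2) * q ^ ((n - l) * k))
      * (PP q p 1 1 N1
        * ((-a⁻¹) ^ N1 * q ^ ((-n - 2 * m) * (N1:ℤ)) * TQ q N1 * PP q p a (1 + n + k + m) N1)
        * ((-b⁻¹) ^ N1 * q ^ ((-2 * l - m) * (N1:ℤ)) * TQ q N1 * PP q p b (1 + k + 2 * l) N1)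
        * ((-(a / b)⁻¹) ^ N1 * q ^ ((1 + n - m) * (N1:ℤ)) * TQ q N1 * PP q p (a / b) (k - n) N1)
        * ((-a⁻¹) ^ N2 * q ^ ((-n) * (N2:ℤ)) * TQ q N2 * PP q p a (1 + l) N2)
        * ((-(a / b)⁻¹) ^ N2 * q ^ ((1 + l - m) * (N2:ℤ)) * TQ q N2 * PP q p (a / b) (m - n) N2)
        * ((-(a / b)⁻¹) ^ N2 * q ^ ((l - m) * (N2:ℤ)) * TQ q N2 * PP q p (a / b) (1 + m - n) N2)
        * ((-b⁻¹) ^ (2 * N2) * q ^ ((-m - 2 * n) * ((2 * N2 : ℕ):ℤ)) * TQ q (2 * N2)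
            * PP q p b (1 + m + 2 * l) (2 * N2)))
      = (PP q p 1 (1 + n - l) N1
        * ((-a⁻¹) ^ N1 * q ^ ((-l - 2 * m) * (N1:ℤ)) * TQ q N1 * PP q p a (1 + l + k + m) N1)
        * ((-b⁻¹) ^ N1 * q ^ ((-l - m - n) * (N1:ℤ)) * TQ q N1 * PP q p b (1 + n + k + l) N1)
        * ((-(a / b)⁻¹) ^ N1 * q ^ ((1 + l - m) * (N1:ℤ)) * TQ q N1 * PP q p (a / b) (k - l) N1)
        * ((-a⁻¹) ^ N2 * q ^ ((-n - 2 * m) * (N2:ℤ)) * TQ q N2 * PP q p a (1 + l + 2 * m) N2)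
        * ((-(a / b)⁻¹) ^ N2 * q ^ ((1 + l) * (N2:ℤ)) * TQ q N2 * PP q p (a / b) (-n) N2)
        * ((-(a / b)⁻¹) ^ N2 * q ^ (l * (N2:ℤ)) * TQ q N2 * PP q p (a / b) (1 - n) N2)
        * ((-b⁻¹) ^ (2 * N2) * q ^ ((-2 * n) * ((2 * N2 : ℕ):ℤ)) * TQ q (2 * N2)
            * PP q p b (1 + 2 * l) (2 * N2))
        * q ^ ((n - l) * -m))
      * (PP q p 1 1 N1 * PP q p a (1 + l + 2 * k) N1 * PP q p b (1 + 2 * n + k) N1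
        * PP q p (a / b) (1 + k - l) N1
        * (PP q p a (1 + l) N2 * PP q p (a / b) (1 + k - n) N2 * PP q p (a / b) (k - n) N2)
        * PP q p b (1 + k + 2 * l) (2 * N2)) := by
    calc _ = (PP q p 1 (1 + n - l) N1 * PP q p 1 1 N1 * PP q p b (1 + n + k + l) N1
          * PP q p (a / b) (1 - n) N2 * PP q p (a / b) (-n) N2 * PP q p b (1 + 2 * l) (2 * N2)
          * PP q p a (1 + l) N2)
        * (PP q p a (1 + l + 2 * k) N2 * PP q p a (1 + n + 2 * k) N1
          * PP q p a (1 + n + k + m) N1)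
        * (PP q p b (1 + k + 2 * l) N1 * PP q p b (1 + m + 2 * l) (2 * N2))
        * (PP q p (a / b) (k - n) N1 * PP q p (a / b) (m - n) N2
          * (PP q p (a / b) (1 + k - n) N1 * PP q p (a / b) (1 + m - n) N2))
        * (q ^ ((n - l) * k)
          * ((-a⁻¹) ^ N1 * q ^ ((-n - 2 * m) * (N1:ℤ)) * TQ q N1)
          * ((-b⁻¹) ^ N1 * q ^ ((-2 * l - m) * (N1:ℤ)) * TQ q N1)
          * ((-(a / b)⁻¹) ^ N1 * q ^ ((1 + n - m) * (N1:ℤ)) * TQ q N1)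
          * ((-a⁻¹) ^ N2 * q ^ ((-n) * (N2:ℤ)) * TQ q N2)
          * ((-(a / b)⁻¹) ^ N2 * q ^ ((1 + l - m) * (N2:ℤ)) * TQ q N2)
          * ((-(a / b)⁻¹) ^ N2 * q ^ ((l - m) * (N2:ℤ)) * TQ q N2)
          * ((-b⁻¹) ^ (2 * N2) * q ^ ((-m - 2 * n) * ((2 * N2 : ℕ):ℤ)) * TQ q (2 * N2))) := by ring
      _ = (PP q p 1 (1 + n - l) N1 * PP q p 1 1 N1 * PP q p b (1 + n + k + l) N1
          * PP q p (a / b) (1 - n) N2 * PP q p (a / b) (-n) N2 * PP q p b (1 + 2 * l) (2 * N2)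
          * PP q p a (1 + l) N2)
        * (PP q p a (1 + l + 2 * k) N1 * PP q p a (1 + l + k + m) N1
          * PP q p a (1 + l + 2 * m) N2)
        * (PP q p b (1 + k + 2 * l) (2 * N2) * PP q p b (1 + 2 * n + k) N1)
        * (PP q p (a / b) (k - n) N2 * PP q p (a / b) (k - l) N1
          * (PP q p (a / b) (1 + k - n) N2 * PP q p (a / b) (1 + k - l) N1))
        * (q ^ ((n - l) * -m)
          * ((-a⁻¹) ^ N1 * q ^ ((-l - 2 * m) * (N1:ℤ)) * TQ q N1)
          * ((-b⁻¹) ^ N1 * q ^ ((-l - m - n) * (N1:ℤ)) * TQ q N1)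
          * ((-(a / b)⁻¹) ^ N1 * q ^ ((1 + l - m) * (N1:ℤ)) * TQ q N1)
          * ((-a⁻¹) ^ N2 * q ^ ((-n - 2 * m) * (N2:ℤ)) * TQ q N2)
          * ((-(a / b)⁻¹) ^ N2 * q ^ ((1 + l) * (N2:ℤ)) * TQ q N2)
          * ((-(a / b)⁻¹) ^ N2 * q ^ (l * (N2:ℤ)) * TQ q N2)
          * ((-b⁻¹) ^ (2 * N2) * q ^ ((-2 * n) * ((2 * N2 : ℕ):ℤ)) * TQ q (2 * N2))) := by rw [famA, famB, famC, famS]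
      _ = _ := by ring
  have hdl : PP q p 1 1 N1 * PP q p a (1 + l + 2 * k) N1 * PP q p b (1 + 2 * n + k) N1
        * PP q p (a / b) (1 + k - l) N1
        * (PP q p a (1 + l) N2 * PP q p (a / b) (1 + k - n) N2 * PP q p (a / b) (k - n) N2)
        * PP q p b (1 + k + 2 * l) (2 * N2) ≠ 0 :=
    mul_ne_zero (mul_ne_zero (mul_ne_zero (mul_ne_zero (mul_ne_zero (hP1 _) (hPa _ _))
      (hPb _ _)) (hPab _ _)) (mul_ne_zero (mul_ne_zero (hPa _ _) (hPab _ _)) (hPab _ _)))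
      (hPb _ _)
  have hdr : PP q p 1 1 N1
        * ((-a⁻¹) ^ N1 * q ^ ((-n - 2 * m) * (N1:ℤ)) * TQ q N1 * PP q p a (1 + n + k + m) N1)
        * ((-b⁻¹) ^ N1 * q ^ ((-2 * l - m) * (N1:ℤ)) * TQ q N1 * PP q p b (1 + k + 2 * l) N1)
        * ((-(a / b)⁻¹) ^ N1 * q ^ ((1 + n - m) * (N1:ℤ)) * TQ q N1 * PP q p (a / b) (k - n) N1)
        * ((-a⁻¹) ^ N2 * q ^ ((-n) * (N2:ℤ)) * TQ q N2 * PP q p a (1 + l) N2)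
        * ((-(a / b)⁻¹) ^ N2 * q ^ ((1 + l - m) * (N2:ℤ)) * TQ q N2 * PP q p (a / b) (m - n) N2)
        * ((-(a / b)⁻¹) ^ N2 * q ^ ((l - m) * (N2:ℤ)) * TQ q N2 * PP q p (a / b) (1 + m - n) N2)
        * ((-b⁻¹) ^ (2 * N2) * q ^ ((-m - 2 * n) * ((2 * N2 : ℕ):ℤ)) * TQ q (2 * N2)
            * PP q p b (1 + m + 2 * l) (2 * N2)) ≠ 0 := by
    have hS : ∀ (x : ℂ), x ≠ 0 → ∀ (N : ℕ) (e : ℤ) (c : ℂ), c ≠ 0 → ∀ (s : ℤ) (M : ℕ),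
        PP q p c s M ≠ 0 → x ^ N * q ^ e * TQ q N * PP q p c s M ≠ 0 := by
      intro x hx N e c _ s M hP
      exact mul_ne_zero (mul_ne_zero (mul_ne_zero (pow_ne_zero _ hx) (zpow_ne_zero _ hq))
        (TQ_ne_zero q _ hq)) hP
    exact mul_ne_zero (mul_ne_zero (mul_ne_zero (mul_ne_zero (mul_ne_zero (mul_ne_zero
      (mul_ne_zero (hP1 _)
        (hS _ hna _ _ _ ha _ _ (hPa _ _)))
        (hS _ hnb _ _ _ hb _ _ (hPb _ _)))
        (hS _ hnab _ _ _ hab _ _ (hPab _ _)))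
        (hS _ hna _ _ _ ha _ _ (hPa _ _)))
        (hS _ hnab _ _ _ hab _ _ (hPab _ _)))
        (hS _ hnab _ _ _ hab _ _ (hPab _ _)))
        (hS _ hnb _ _ _ hb _ _ (hPb _ _))
  trans ((PP q p 1 (1 + n - l) N1 * PP q p a (1 + n + 2 * k) N1 * PP q p b (1 + n + k + l) N1
        * PP q p (a / b) (1 + k - n) N1
        * (PP q p a (1 + l + 2 * k) N2 * PP q p (a / b) (1 - n) N2 * PP q p (a / b) (-n) N2)
        * PP q p b (1 + 2 * l) (2 * N2) * q ^ ((n - l) * k))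
      / (PP q p 1 1 N1 * PP q p a (1 + l + 2 * k) N1 * PP q p b (1 + 2 * n + k) N1
        * PP q p (a / b) (1 + k - l) N1
        * (PP q p a (1 + l) N2 * PP q p (a / b) (1 + k - n) N2 * PP q p (a / b) (k - n) N2)
        * PP q p b (1 + k + 2 * l) (2 * N2)))
  · ring
  trans ((PP q p 1 (1 + n - l) N1
        * ((-a⁻¹) ^ N1 * q ^ ((-l - 2 * m) * (N1:ℤ)) * TQ q N1 * PP q p a (1 + l + k + m) N1)
        * ((-b⁻¹) ^ N1 * q ^ ((-l - m - n) * (N1:ℤ)) * TQ q N1 * PP q p b (1 + n + k + l) N1)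
        * ((-(a / b)⁻¹) ^ N1 * q ^ ((1 + l - m) * (N1:ℤ)) * TQ q N1 * PP q p (a / b) (k - l) N1)
        * ((-a⁻¹) ^ N2 * q ^ ((-n - 2 * m) * (N2:ℤ)) * TQ q N2 * PP q p a (1 + l + 2 * m) N2)
        * ((-(a / b)⁻¹) ^ N2 * q ^ ((1 + l) * (N2:ℤ)) * TQ q N2 * PP q p (a / b) (-n) N2)
        * ((-(a / b)⁻¹) ^ N2 * q ^ (l * (N2:ℤ)) * TQ q N2 * PP q p (a / b) (1 - n) N2)
        * ((-b⁻¹) ^ (2 * N2) * q ^ ((-2 * n) * ((2 * N2 : ℕ):ℤ)) * TQ q (2 * N2)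
            * PP q p b (1 + 2 * l) (2 * N2))
        * q ^ ((n - l) * -m))
      / (PP q p 1 1 N1
        * ((-a⁻¹) ^ N1 * q ^ ((-n - 2 * m) * (N1:ℤ)) * TQ q N1 * PP q p a (1 + n + k + m) N1)
        * ((-b⁻¹) ^ N1 * q ^ ((-2 * l - m) * (N1:ℤ)) * TQ q N1 * PP q p b (1 + k + 2 * l) N1)
        * ((-(a / b)⁻¹) ^ N1 * q ^ ((1 + n - m) * (N1:ℤ)) * TQ q N1 * PP q p (a / b) (k - n) N1)
        * ((-a⁻¹) ^ N2 * q ^ ((-n) * (N2:ℤ)) * TQ q N2 * PP q p a (1 + l) N2)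
        * ((-(a / b)⁻¹) ^ N2 * q ^ ((1 + l - m) * (N2:ℤ)) * TQ q N2 * PP q p (a / b) (m - n) N2)
        * ((-(a / b)⁻¹) ^ N2 * q ^ ((l - m) * (N2:ℤ)) * TQ q N2 * PP q p (a / b) (1 + m - n) N2)
        * ((-b⁻¹) ^ (2 * N2) * q ^ ((-m - 2 * n) * ((2 * N2 : ℕ):ℤ)) * TQ q (2 * N2)
            * PP q p b (1 + m + 2 * l) (2 * N2))))
  · exact (div_eq_div_iff hdl hdr).mpr key
  · ring
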